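/- Consider a bipartite graph from n agents to pieces in which each two agents share at most one common neighbor, and such that for any set of agents each having at least two neighbors, one of them has a neighbor belonging to no other agent in the set (formally: the 'last cutter' property). Then if n−1 of the agents each have at least 2 neighbors, every group of k of these n−1 agents jointly has at least k+1 neighbors; hence together with the remaining agent (with at least one neighbor) a matching saturating all n agents exists. -/
import Mathlib


/-- Unknown-agent lemma (structural version): in a bipartite preference graph where each
two agents share at most one common neighbor and the "last cutter" property holds (in any
nonempty group of known agents, some agent has a preferred piece preferred by no other
agent of the group), if each of the `n-1` known agents (all agents except `u`) has at
least 2 neighbors, then every nonempty group of `k` known agents jointly has at least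
`k+1` neighbors, and a matching saturating all `n` agents exists. -/
theorem last_cutter_matching {β : Type*} [Fintype β] [DecidableEq β] (n : ℕ)
    (nbhd : Fin n → Finset β) (u : Fin n)
    (hne : ∀ i, (nbhd i).Nonempty)
    (htwo : ∀ i, i ≠ u → 2 ≤ (nbhd i).card)
    (hshare : ∀ i j : Fin n, i ≠ j → (nbhd i ∩ nbhd j).card ≤ 1)
    (hlastcutter : ∀ S : Finset (Fin n), S.Nonempty → (∀ i ∈ S, i ≠ u) →
      ∃ i ∈ S, ∃ p ∈ nbhd i, ∀ j ∈ S, j ≠ i → p ∉ nbhd j) :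
    (∀ S : Finset (Fin n), S.Nonempty → (∀ i ∈ S, i ≠ u) →
      S.card + 1 ≤ (S.biUnion nbhd).card) ∧
    ∃ f : Fin n → β, Function.Injective f ∧ ∀ i, f i ∈ nbhd i := by
  have key : ∀ S : Finset (Fin n), S.Nonempty → (∀ i ∈ S, i ≠ u) →
      S.card + 1 ≤ (S.biUnion nbhd).card := by
    intro S
    induction S using Finset.strongInduction with
    | _ S ih =>
      intro hSne hSu
      obtain ⟨i, hiS, p, hp, hpnot⟩ := hlastcutter S hSne hSu
      by_cases hS1 : S.erase i = ∅
      · have hSsing : S = {i} := by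
          apply Finset.eq_singleton_iff_unique_mem.2
          refine ⟨hiS, fun j hj => ?_⟩
          by_contra h
          have : j ∈ S.erase i := Finset.mem_erase.2 ⟨h, hj⟩
          simp [hS1] at this
        rw [hSsing]
        simpa using htwo i (hSu i hiS)
      · have hne' : (S.erase i).Nonempty := Finset.nonempty_iff_ne_empty.2 hS1
        have hsub : S.erase i ⊂ S := Finset.erase_ssubset hiS
        have h1 := ih _ hsub hne' (fun j hj => hSu j (Finset.mem_of_mem_erase hj))
        have hpnotin : p ∉ (S.erase i).biUnion nbhd := by
          simp only [Finset.mem_biUnion]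
          rintro ⟨j, hj, hpj⟩
          exact hpnot j (Finset.mem_of_mem_erase hj) (Finset.ne_of_mem_erase hj) hpj
        have hsubset : insert p ((S.erase i).biUnion nbhd) ⊆ S.biUnion nbhd := by
          intro x hx
          rcases Finset.mem_insert.1 hx with h | h
          · subst h; exact Finset.mem_biUnion.2 ⟨i, hiS, hp⟩
          · exact Finset.biUnion_subset_biUnion_of_subset_left _ (Finset.erase_subset _ _) h
        have h2 := Finset.card_le_card hsubset
        rw [Finset.card_insert_of_notMem hpnotin] at h2
        have h3 : (S.erase i).card = S.card - 1 := Finset.card_erase_of_mem hiS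
        have h4 : 1 ≤ S.card := Finset.card_pos.2 hSne
        omega
  refine ⟨key, ?_⟩
  rw [← Finset.all_card_le_biUnion_card_iff_exists_injective]
  intro T
  by_cases hu : u ∈ T
  · by_cases he : T.erase u = ∅
    · have hTsing : T = {u} := by
        apply Finset.eq_singleton_iff_unique_mem.2
        refine ⟨hu, fun j hj => ?_⟩
        by_contra h
        have : j ∈ T.erase u := Finset.mem_erase.2 ⟨h, hj⟩
        simp [he] at this
      rw [hTsing]
      simpa using Finset.card_pos.2 (hne u)
    · have hne' : (T.erase u).Nonempty := Finset.nonempty_iff_ne_empty.2 he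
      have h1 := key _ hne' (fun j hj => Finset.ne_of_mem_erase hj)
      have h2 : (T.erase u).biUnion nbhd ⊆ T.biUnion nbhd :=
        Finset.biUnion_subset_biUnion_of_subset_left _ (Finset.erase_subset _ _)
      have h3 := Finset.card_le_card h2
      have h4 : (T.erase u).card = T.card - 1 := Finset.card_erase_of_mem hu
      have h5 : 1 ≤ T.card := Finset.card_pos.2 ⟨u, hu⟩
      omega
  · rcases T.eq_empty_or_nonempty with rfl | hTne
    · simp
    · have := key T hTne (fun j hj => fun h => hu (h ▸ hj))
      omega
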